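/- For the biderivation Γ₂ on ℝ[θ₁,θ₂,η] determined by the matrix of the cyclic group model (Γ₂(θ₁,θ₁)=1−θ₁², Γ₂(θ₁,θ₂)=−nθ₁θ₂, Γ₂(θ₁,η)=−nθ₁η, Γ₂(θ₂,θ₂)=n²((1−θ₁²)^{n−1}−θ₂²), Γ₂(θ₂,η)=−n²θ₂η, Γ₂(η,η)=n²((1−θ₁²)^{n−1}−η²)), the polynomial P = (1−θ₁²)ⁿ − θ₂² − η² satisfies Γ₂(θ₁,P) = −2nθ₁P, Γ₂(θ₂,P) = −2n²θ₂P, Γ₂(η,P) = −2n²ηP. -/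
import Mathlib


open MvPolynomial

/-- For the biderivation `Γ₂` on `ℝ[θ₁,θ₂,η]` determined by its values on generators,
the chain rule gives `Γ₂(θᵢ, P) = ∑ⱼ Γ₂(θᵢ, varⱼ) ∂ⱼP`. -/
theorem stmt6 (n : ℕ) (hn : 1 ≤ n) :
    let R := MvPolynomial (Fin 3) ℝ
    let θ₁ : MvPolynomial (Fin 3) ℝ := X 0
    let θ₂ : MvPolynomial (Fin 3) ℝ := X 1
    let η : MvPolynomial (Fin 3) ℝ := X 2
    let N : MvPolynomial (Fin 3) ℝ := (n : MvPolynomial (Fin 3) ℝ)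
    let g11 := 1 - θ₁ ^ 2
    let g12 := -N * θ₁ * θ₂
    let g13 := -N * θ₁ * η
    let g22 := N ^ 2 * ((1 - θ₁ ^ 2) ^ (n - 1) - θ₂ ^ 2)
    let g23 := -N ^ 2 * θ₂ * η
    let g33 := N ^ 2 * ((1 - θ₁ ^ 2) ^ (n - 1) - η ^ 2)
    let P : MvPolynomial (Fin 3) ℝ := (1 - θ₁ ^ 2) ^ n - θ₂ ^ 2 - η ^ 2
    g11 * pderiv 0 P + g12 * pderiv 1 P + g13 * pderiv 2 P = -2 * N * θ₁ * P ∧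
    g12 * pderiv 0 P + g22 * pderiv 1 P + g23 * pderiv 2 P = -2 * N ^ 2 * θ₂ * P ∧
    g13 * pderiv 0 P + g23 * pderiv 1 P + g33 * pderiv 2 P = -2 * N ^ 2 * η * P := by
  intro R θ₁ θ₂ η N g11 g12 g13 g22 g23 g33 P
  have hn' : n - 1 + 1 = n := Nat.succ_pred_eq_of_pos hn
  have hPow : (1 - θ₁ ^ 2) ^ n = (1 - θ₁ ^ 2) ^ (n - 1) * (1 - θ₁ ^ 2) := by
    rw [← pow_succ, hn']
  have h0 : pderiv 0 P = N * (1 - θ₁ ^ 2) ^ (n - 1) * (-(2 * θ₁)) := by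
    simp only [P, map_sub, Derivation.leibniz_pow]
    simp [pderiv_X, smul_eq_mul, θ₁, θ₂, η, N]
    ring
  have h1 : pderiv 1 P = -(2 * θ₂) := by
    simp only [P, map_sub, Derivation.leibniz_pow]
    simp [pderiv_X, smul_eq_mul, θ₁, θ₂, η]
  have h2 : pderiv 2 P = -(2 * η) := by
    simp only [P, map_sub, Derivation.leibniz_pow]
    simp [pderiv_X, smul_eq_mul, θ₁, θ₂, η]
  refine ⟨?_, ?_, ?_⟩ <;>
    rw [h0, h1, h2] <;> simp only [g11, g12, g13, g22, g23, g33, P, hPow] <;> ring
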